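/- arXiv:1706.02495 — 3 statements merged into one kernel-verified Lean document; each statement's English description precedes it below -/
import Mathlib

section
/- Let t be a positive integer, B a t×t real symmetric positive semidefinite matrix, Y ∈ ℝᵗ, and γ₀ > 0. Define V(γ) = B + γI, Ŷ(γ) = B·V(γ)⁻¹Y and S(γ) = ‖Y − Ŷ(γ)‖². Then S(γ₀) = −γ₀² · d/dγ [Yᵀ V(γ)⁻¹ Y] evaluated at γ = γ₀; equivalently, the function γ ↦ Yᵀ(B+γI)⁻¹Y has derivative at γ₀ equal to −S(γ₀)/γ₀². -/
open Matrix

section Aux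

variable {t : ℕ}

private lemma posDef_V {B : Matrix (Fin t) (Fin t) ℝ} (hB : B.PosSemidef)
    {γ : ℝ} (hγ : 0 < γ) : (B + γ • (1 : Matrix (Fin t) (Fin t) ℝ)).PosDef := by
  refine Matrix.PosDef.posSemidef_add hB ?_
  rw [Matrix.smul_one_eq_diagonal]
  exact Matrix.posDef_diagonal_iff.mpr (fun _ => hγ)

private lemma aux_inv_sub_inv {A C : Matrix (Fin t) (Fin t) ℝ}
    (hA : IsUnit A.det) (hC : IsUnit C.det) :
    A⁻¹ - C⁻¹ = A⁻¹ * (C - A) * C⁻¹ := by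
  rw [Matrix.mul_sub, Matrix.sub_mul, Matrix.mul_nonsing_inv_cancel_right _ _ hC,
    Matrix.mul_assoc, Matrix.nonsing_inv_mul_cancel_left _ _ hA]

end Aux

/-- With `V(γ) = B + γI`, `Ŷ(γ) = B V(γ)⁻¹ Y` and
`S(γ) = ‖Y − Ŷ(γ)‖²`, one has `S(γ₀) = −γ₀² · d/dγ (Yᵀ V(γ)⁻¹ Y)|_{γ₀}`; equivalently
`γ ↦ Yᵀ (B + γI)⁻¹ Y` has derivative `−S(γ₀)/γ₀²` at `γ₀`. -/
theorem gcv_ssr_eq_neg_gamma_sq_deriv_quadform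
    (t : ℕ) (ht : 0 < t) (B : Matrix (Fin t) (Fin t) ℝ) (hB : B.PosSemidef)
    (Y : Fin t → ℝ) (γ₀ : ℝ) (hγ₀ : 0 < γ₀) :
    (Y - (B * (B + γ₀ • (1 : Matrix (Fin t) (Fin t) ℝ))⁻¹) *ᵥ Y) ⬝ᵥ
        (Y - (B * (B + γ₀ • (1 : Matrix (Fin t) (Fin t) ℝ))⁻¹) *ᵥ Y)
      = -γ₀ ^ 2 * deriv (fun γ : ℝ =>
          Y ⬝ᵥ ((B + γ • (1 : Matrix (Fin t) (Fin t) ℝ))⁻¹ *ᵥ Y)) γ₀ ∧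
    HasDerivAt (fun γ : ℝ => Y ⬝ᵥ ((B + γ • (1 : Matrix (Fin t) (Fin t) ℝ))⁻¹ *ᵥ Y))
      (-((Y - (B * (B + γ₀ • (1 : Matrix (Fin t) (Fin t) ℝ))⁻¹) *ᵥ Y) ⬝ᵥ
          (Y - (B * (B + γ₀ • (1 : Matrix (Fin t) (Fin t) ℝ))⁻¹) *ᵥ Y)) / γ₀ ^ 2) γ₀ := by
  classical
  set V : ℝ → Matrix (Fin t) (Fin t) ℝ := fun γ => B + γ • 1 with hVdef
  have hVpd : ∀ γ : ℝ, 0 < γ → (V γ).PosDef := fun γ hγ => posDef_V hB hγ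
  have hVdet : ∀ γ : ℝ, 0 < γ → IsUnit (V γ).det :=
    fun γ hγ => ((hVpd γ hγ).det_pos).ne'.isUnit
  -- symmetry of V γ₀ and its inverse
  have hV0sym : (V γ₀)ᵀ = V γ₀ := by
    have := (hVpd γ₀ hγ₀).isHermitian
    rwa [Matrix.IsHermitian, Matrix.conjTranspose_eq_transpose_of_trivial] at this
  have hV0invsym : ((V γ₀)⁻¹)ᵀ = (V γ₀)⁻¹ := by
    rw [Matrix.transpose_nonsing_inv, hV0sym]
  set w : Fin t → ℝ := (V γ₀)⁻¹ *ᵥ Y with hw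
  -- the residual is γ₀ • w
  have hres : Y - (B * (V γ₀)⁻¹) *ᵥ Y = γ₀ • w := by
    have hBmul : B * (V γ₀)⁻¹ = 1 - γ₀ • (V γ₀)⁻¹ := by
      have : B = V γ₀ - γ₀ • 1 := by simp [hVdef]
      rw [this, Matrix.sub_mul, Matrix.mul_nonsing_inv _ (hVdet γ₀ hγ₀),
        Matrix.smul_mul, Matrix.one_mul]
    rw [hBmul, Matrix.sub_mulVec, Matrix.one_mulVec, Matrix.smul_mulVec, hw]
    abel
  have hS : (Y - (B * (V γ₀)⁻¹) *ᵥ Y) ⬝ᵥ (Y - (B * (V γ₀)⁻¹) *ᵥ Y)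
      = γ₀ ^ 2 * (w ⬝ᵥ w) := by
    rw [hres, smul_dotProduct, dotProduct_smul, smul_eq_mul, smul_eq_mul,
      ← mul_assoc, sq]
  -- the auxiliary function g
  set g : ℝ → ℝ := fun γ => -(Y ⬝ᵥ ((V γ)⁻¹ *ᵥ w)) with hg
  have hgγ₀ : g γ₀ = -(w ⬝ᵥ w) := by
    have : Y ⬝ᵥ ((V γ₀)⁻¹ *ᵥ w) = w ⬝ᵥ w := by
      rw [Matrix.dotProduct_mulVec, ← Matrix.mulVec_transpose, hV0invsym, ← hw]
    simp [hg, this]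
  -- continuity of g at γ₀
  have hVcont : Continuous V := by
    have : Continuous fun γ : ℝ => γ • (1 : Matrix (Fin t) (Fin t) ℝ) :=
      continuous_id.smul continuous_const
    exact continuous_const.add this
  have hinvcont : ContinuousAt (fun γ => (V γ)⁻¹) γ₀ := by
    refine ContinuousAt.comp ?_ hVcont.continuousAt
    refine continuousAt_matrix_inv _ ?_
    have hdet : (V γ₀).det ≠ 0 := (hVpd γ₀ hγ₀).det_pos.ne'
    rw [Ring.inverse_eq_inv']
    exact continuousAt_inv₀ hdet
  have hgcont : ContinuousAt g γ₀ := by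
    have h2 : Continuous fun M : Matrix (Fin t) (Fin t) ℝ => -(Y ⬝ᵥ (M *ᵥ w)) :=
      (continuous_const.dotProduct (continuous_id.matrix_mulVec continuous_const)).neg
    exact h2.continuousAt.comp hinvcont
  -- slope of f equals g on positive reals
  set f : ℝ → ℝ := fun γ => Y ⬝ᵥ ((V γ)⁻¹ *ᵥ Y) with hf
  have hslope : ∀ γ : ℝ, 0 < γ → γ ≠ γ₀ → slope f γ₀ γ = g γ := by
    intro γ hγ hne
    have hdiff : (V γ)⁻¹ - (V γ₀)⁻¹ = -(γ - γ₀) • ((V γ)⁻¹ * (V γ₀)⁻¹) := by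
      rw [aux_inv_sub_inv (hVdet γ hγ) (hVdet γ₀ hγ₀)]
      have : V γ₀ - V γ = -(γ - γ₀) • (1 : Matrix (Fin t) (Fin t) ℝ) := by
        simp only [hVdef, neg_smul, sub_smul]
        abel
      rw [this, Matrix.mul_smul, Matrix.mul_one, Matrix.smul_mul]
    have hfdiff : f γ - f γ₀ = (γ - γ₀) * g γ := by
      have : f γ - f γ₀ = Y ⬝ᵥ (((V γ)⁻¹ - (V γ₀)⁻¹) *ᵥ Y) := by
        rw [hf]; simp [Matrix.sub_mulVec, dotProduct_sub]
      rw [this, hdiff, Matrix.smul_mulVec, dotProduct_smul, smul_eq_mul,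
        hg]
      have : ((V γ)⁻¹ * (V γ₀)⁻¹) *ᵥ Y = (V γ)⁻¹ *ᵥ w := by
        rw [hw, Matrix.mulVec_mulVec]
      rw [this]; ring
    rw [slope_def_field, hfdiff]
    field_simp [sub_ne_zero.mpr hne]
  -- conclude HasDerivAt f (g γ₀)
  have hderiv : HasDerivAt f (g γ₀) γ₀ := by
    rw [hasDerivAt_iff_tendsto_slope]
    have hmem : ∀ᶠ γ in nhdsWithin γ₀ {γ₀}ᶜ, slope f γ₀ γ = g γ := by
      filter_upwards [nhdsWithin_le_nhds (Ioi_mem_nhds hγ₀), self_mem_nhdsWithin]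
        with γ h1 h2
      exact hslope γ h1 h2
    exact (hgcont.tendsto.mono_left nhdsWithin_le_nhds).congr'
      (hmem.mono fun γ h => h.symm)
  have hkey : g γ₀ = -((Y - (B * (V γ₀)⁻¹) *ᵥ Y) ⬝ᵥ (Y - (B * (V γ₀)⁻¹) *ᵥ Y)) / γ₀ ^ 2 := by
    rw [hgγ₀, hS]
    field_simp
  constructor
  · rw [hderiv.deriv, hkey, hS]
    field_simp
  · rw [← hkey]; exact hderiv
end

section
/- Let n be a positive integer, A and Q real n×n matrices, C a real 1×n matrix, and γ₀ a real number. Let P be a function from ℝ to real n×n matrices that is differentiable at γ₀ with derivative Σ₀, such that P(γ₀) is symmetric and the scalar s₀ = (C P(γ₀) Cᵀ)₀₀ + γ₀ is nonzero. Define K(γ) = A P(γ) Cᵀ · ((C P(γ) Cᵀ)₀₀ + γ)⁻¹ and K₀ = K(γ₀). Then the Riccati map γ ↦ A P(γ) Aᵀ + Q − A P(γ) Cᵀ · ((C P(γ) Cᵀ)₀₀ + γ)⁻¹ · C P(γ) Aᵀ is differentiable at γ₀ with derivative (A − K₀ C) Σ₀ (A − K₀ C)ᵀ + K₀ K₀ᵀ.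 -/
open Matrix

lemma aux_hasDerivAt_entry {n m p : ℕ}
    (P : ℝ → Matrix (Fin n) (Fin n) ℝ) (S₀ : Matrix (Fin n) (Fin n) ℝ) (γ₀ : ℝ)
    (hP : ∀ i j, HasDerivAt (fun γ : ℝ => P γ i j) (S₀ i j) γ₀)
    (X : Matrix (Fin m) (Fin n) ℝ) (Y : Matrix (Fin n) (Fin p) ℝ) (i : Fin m) (j : Fin p) :
    HasDerivAt (fun γ : ℝ => (X * P γ * Y) i j) ((X * S₀ * Y) i j) γ₀ := by
  simp only [Matrix.mul_apply]
  apply HasDerivAt.fun_sum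
  intro l _
  apply HasDerivAt.mul_const
  apply HasDerivAt.fun_sum
  intro k _
  exact (hP k l).const_mul _

/-- equation DRE2 of the paper. If `P : ℝ → ℝ^{n×n}` is differentiable at
`γ₀` with derivative `S₀` (entrywise), `P γ₀` is symmetric and `s₀ = (C P(γ₀) Cᵀ)₀₀ + γ₀ ≠ 0`,
then with Kalman gain `K(γ) = A P(γ) Cᵀ ((C P(γ) Cᵀ)₀₀ + γ)⁻¹` and `K₀ = K(γ₀)`, the Riccati map
`γ ↦ A P(γ) Aᵀ + Q − A P(γ) Cᵀ ((C P(γ) Cᵀ)₀₀ + γ)⁻¹ C P(γ) Aᵀ` is differentiable at `γ₀` with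
derivative `(A − K₀C) S₀ (A − K₀C)ᵀ + K₀ K₀ᵀ`. -/
theorem riccati_map_hasDerivAt
    (n : ℕ) (hn : 0 < n) (A Q : Matrix (Fin n) (Fin n) ℝ)
    (C : Matrix (Fin 1) (Fin n) ℝ) (γ₀ : ℝ)
    (P : ℝ → Matrix (Fin n) (Fin n) ℝ) (S₀ : Matrix (Fin n) (Fin n) ℝ)
    (hP : ∀ i j, HasDerivAt (fun γ : ℝ => P γ i j) (S₀ i j) γ₀)
    (hPsymm : (P γ₀).IsSymm)
    (hs : (C * P γ₀ * Cᵀ) 0 0 + γ₀ ≠ 0)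
    (K₀ : Matrix (Fin n) (Fin 1) ℝ)
    (hK₀ : K₀ = ((C * P γ₀ * Cᵀ) 0 0 + γ₀)⁻¹ • (A * P γ₀ * Cᵀ)) :
    ∀ i j, HasDerivAt
      (fun γ : ℝ => (A * P γ * Aᵀ + Q
        - ((C * P γ * Cᵀ) 0 0 + γ)⁻¹ • (A * P γ * Cᵀ * (C * P γ * Aᵀ))) i j)
      (((A - K₀ * C) * S₀ * (A - K₀ * C)ᵀ + K₀ * K₀ᵀ) i j) γ₀ := by
  intro i j
  set s : ℝ := (C * P γ₀ * Cᵀ) 0 0 + γ₀ with hsdef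
  -- V = Uᵀ
  have hV : C * P γ₀ * Aᵀ = (A * P γ₀ * Cᵀ)ᵀ := by
    rw [Matrix.transpose_mul, Matrix.transpose_mul, Matrix.transpose_transpose, hPsymm.eq,
      Matrix.mul_assoc]
  -- derivative building blocks
  have hs' : HasDerivAt (fun γ : ℝ => (C * P γ * Cᵀ) 0 0 + γ)
      ((C * S₀ * Cᵀ) 0 0 + 1) γ₀ :=
    (aux_hasDerivAt_entry P S₀ γ₀ hP C Cᵀ 0 0).add (hasDerivAt_id γ₀)
  have hinv : HasDerivAt (fun γ : ℝ => ((C * P γ * Cᵀ) 0 0 + γ)⁻¹)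
      (-((C * S₀ * Cᵀ) 0 0 + 1) / s ^ 2) γ₀ := hs'.inv hs
  have hU : HasDerivAt (fun γ : ℝ => (A * P γ * Cᵀ) i 0) ((A * S₀ * Cᵀ) i 0) γ₀ :=
    aux_hasDerivAt_entry P S₀ γ₀ hP A Cᵀ i 0
  have hVj : HasDerivAt (fun γ : ℝ => (C * P γ * Aᵀ) 0 j) ((C * S₀ * Aᵀ) 0 j) γ₀ :=
    aux_hasDerivAt_entry P S₀ γ₀ hP C Aᵀ 0 j
  have hM : HasDerivAt (fun γ : ℝ => (A * P γ * Cᵀ) i 0 * (C * P γ * Aᵀ) 0 j)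
      ((A * S₀ * Cᵀ) i 0 * (C * P γ₀ * Aᵀ) 0 j
        + (A * P γ₀ * Cᵀ) i 0 * (C * S₀ * Aᵀ) 0 j) γ₀ := hU.mul hVj
  have hAA : HasDerivAt (fun γ : ℝ => (A * P γ * Aᵀ) i j) ((A * S₀ * Aᵀ) i j) γ₀ :=
    aux_hasDerivAt_entry P S₀ γ₀ hP A Aᵀ i j
  have h := (hAA.add_const (Q i j)).sub (hinv.mul hM)
  have hfun : (fun γ : ℝ => (A * P γ * Aᵀ + Q
        - ((C * P γ * Cᵀ) 0 0 + γ)⁻¹ • (A * P γ * Cᵀ * (C * P γ * Aᵀ))) i j)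
      = fun γ : ℝ => (A * P γ * Aᵀ) i j + Q i j
        - ((C * P γ * Cᵀ) 0 0 + γ)⁻¹ * ((A * P γ * Cᵀ) i 0 * (C * P γ * Aᵀ) 0 j) := by
    funext γ
    simp [Matrix.sub_apply, Matrix.add_apply, Matrix.smul_apply, smul_eq_mul,
      Matrix.mul_apply (M := A * P γ * Cᵀ), Fin.sum_univ_one]
  rw [hfun]
  refine h.congr_deriv ?_
  symm
  -- equality of derivatives
  rw [hK₀, hV]
  set U : Matrix (Fin n) (Fin 1) ℝ := A * P γ₀ * Cᵀ with hUdef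
  have h11 : ∀ W : Matrix (Fin 1) (Fin 1) ℝ, W = (W 0 0) • (1 : Matrix (Fin 1) (Fin 1) ℝ) := by
    intro W
    ext a b
    fin_cases a; fin_cases b; simp
  have hcollapse : U * (C * S₀ * Cᵀ) * Uᵀ = ((C * S₀ * Cᵀ) 0 0) • (U * Uᵀ) := by
    rw [h11 (C * S₀ * Cᵀ)]
    simp [Matrix.mul_smul, Matrix.smul_mul]
  -- expand everything
  have expand : (A - s⁻¹ • U * C) * S₀ * (A - s⁻¹ • U * C)ᵀ + (s⁻¹ • U) * (s⁻¹ • U)ᵀ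
      = A * S₀ * Aᵀ - s⁻¹ • (A * S₀ * Cᵀ * Uᵀ) - s⁻¹ • (U * (C * S₀ * Aᵀ))
        + (s⁻¹ * s⁻¹ * ((C * S₀ * Cᵀ) 0 0)) • (U * Uᵀ)
        + (s⁻¹ * s⁻¹) • (U * Uᵀ) := by
    rw [Matrix.transpose_sub, Matrix.transpose_smul, Matrix.transpose_mul]
    simp only [Matrix.sub_mul, Matrix.mul_sub, Matrix.smul_mul, Matrix.mul_smul,
      Matrix.transpose_smul, smul_smul]
    rw [show U * C * S₀ * (Cᵀ * Uᵀ) = U * (C * S₀ * Cᵀ) * Uᵀ by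
      simp only [Matrix.mul_assoc]]
    rw [show U * C * S₀ * Aᵀ = U * (C * S₀ * Aᵀ) by simp only [Matrix.mul_assoc]]
    rw [show A * S₀ * (Cᵀ * Uᵀ) = A * S₀ * Cᵀ * Uᵀ by simp only [Matrix.mul_assoc]]
    rw [hcollapse]
    module
  rw [expand]
  simp only [Matrix.sub_apply, Matrix.add_apply, Matrix.smul_apply, smul_eq_mul,
    Matrix.mul_apply (M := A * S₀ * Cᵀ), Matrix.mul_apply (M := U),
    Matrix.transpose_apply, Fin.sum_univ_one]
  rw [← hsdef]
  field_simp
  ring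
end

section
/- Let n be a positive integer, A a real n×n matrix, C a real 1×n matrix, y and γ₀ real numbers. Let P : ℝ → (real n×n matrices) be differentiable at γ₀ with derivative Σ₀, and let x̂ : ℝ → ℝⁿ be differentiable at γ₀ with derivative ζ₀, such that the scalar s₀ = (C P(γ₀) Cᵀ)₀₀ + γ₀ is nonzero. Define K(γ) = A P(γ) Cᵀ · ((C P(γ) Cᵀ)₀₀ + γ)⁻¹, K₀ = K(γ₀), and G₀ = (A Σ₀ Cᵀ − K₀ · ((C Σ₀ Cᵀ)₀₀ + 1)) · s₀⁻¹. Then the function γ ↦ A x̂(γ) + K(γ) · (y − (C x̂(γ))₀) is differentiable at γ₀ with derivative (A − K₀ C) ζ₀ + G₀ · (y − (C x̂(γ₀))₀). -/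
open Matrix

/-- equation zpred of the paper. If `P : ℝ → ℝ^{n×n}` has entrywise
derivative `S₀` at `γ₀` and `xhat : ℝ → ℝⁿ` has derivative `ζ₀` at `γ₀`, with
`s₀ = (C P(γ₀) Cᵀ)₀₀ + γ₀ ≠ 0`, Kalman gain `K(γ) = A P(γ) Cᵀ ((C P(γ) Cᵀ)₀₀ + γ)⁻¹`,
`K₀ = K(γ₀)` and modified gain `G₀ = (A S₀ Cᵀ − K₀ ((C S₀ Cᵀ)₀₀ + 1)) s₀⁻¹`, then
`γ ↦ A xhat(γ) + K(γ) (y − (C xhat(γ))₀)` is differentiable at `γ₀` with derivative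
`(A − K₀C) ζ₀ + G₀ (y − (C xhat(γ₀))₀)`. -/
theorem kalman_prediction_hasDerivAt_zeta
    (n : ℕ) (hn : 0 < n) (A : Matrix (Fin n) (Fin n) ℝ)
    (C : Matrix (Fin 1) (Fin n) ℝ) (y γ₀ : ℝ)
    (P : ℝ → Matrix (Fin n) (Fin n) ℝ) (S₀ : Matrix (Fin n) (Fin n) ℝ)
    (hP : ∀ i j, HasDerivAt (fun γ : ℝ => P γ i j) (S₀ i j) γ₀)
    (xhat : ℝ → (Fin n → ℝ)) (ζ₀ : Fin n → ℝ)
    (hx : ∀ i, HasDerivAt (fun γ : ℝ => xhat γ i) (ζ₀ i) γ₀)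
    (s₀ : ℝ) (hs₀_def : s₀ = (C * P γ₀ * Cᵀ) 0 0 + γ₀) (hs₀ : s₀ ≠ 0)
    (K : ℝ → Matrix (Fin n) (Fin 1) ℝ)
    (hK : ∀ γ, K γ = ((C * P γ * Cᵀ) 0 0 + γ)⁻¹ • (A * P γ * Cᵀ))
    (K₀ : Matrix (Fin n) (Fin 1) ℝ) (hK₀ : K₀ = K γ₀)
    (G₀ : Matrix (Fin n) (Fin 1) ℝ)
    (hG₀ : G₀ = s₀⁻¹ • (A * S₀ * Cᵀ - ((C * S₀ * Cᵀ) 0 0 + 1) • K₀)) :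
    ∀ i, HasDerivAt
      (fun γ : ℝ => (A *ᵥ xhat γ + (y - (C *ᵥ xhat γ) 0) • (fun j => K γ j 0)) i)
      (((A - K₀ * C) *ᵥ ζ₀ + (y - (C *ᵥ xhat γ₀) 0) • (fun j => G₀ j 0)) i) γ₀ := by
  intro i
  -- derivative of the scalar (C P γ Cᵀ)₀₀
  have hCPC : HasDerivAt (fun γ : ℝ => (C * P γ * Cᵀ) 0 0) ((C * S₀ * Cᵀ) 0 0) γ₀ := by
    simp only [Matrix.mul_apply, Matrix.transpose_apply, Finset.sum_mul]
    apply HasDerivAt.fun_sum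
    intro k _
    apply HasDerivAt.fun_sum
    intro j _
    exact (((hP j k).const_mul (C 0 j)).mul_const (C 0 k))
  have hs' : HasDerivAt (fun γ : ℝ => (C * P γ * Cᵀ) 0 0 + γ)
      ((C * S₀ * Cᵀ) 0 0 + 1) γ₀ := hCPC.add (hasDerivAt_id γ₀)
  have hAPC : HasDerivAt (fun γ : ℝ => (A * P γ * Cᵀ) i 0) ((A * S₀ * Cᵀ) i 0) γ₀ := by
    simp only [Matrix.mul_apply, Matrix.transpose_apply, Finset.sum_mul]
    apply HasDerivAt.fun_sum
    intro k _
    apply HasDerivAt.fun_sum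
    intro j _
    exact (((hP j k).const_mul (A i j)).mul_const (C 0 k))
  have hs0ne : (C * P γ₀ * Cᵀ) 0 0 + γ₀ ≠ 0 := hs₀_def ▸ hs₀
  have hinv : HasDerivAt (fun γ : ℝ => ((C * P γ * Cᵀ) 0 0 + γ)⁻¹)
      (-((C * S₀ * Cᵀ) 0 0 + 1) / ((C * P γ₀ * Cᵀ) 0 0 + γ₀) ^ 2) γ₀ :=
    hs'.inv hs0ne
  have hKent : HasDerivAt (fun γ : ℝ => ((C * P γ * Cᵀ) 0 0 + γ)⁻¹ * (A * P γ * Cᵀ) i 0)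
      (-((C * S₀ * Cᵀ) 0 0 + 1) / ((C * P γ₀ * Cᵀ) 0 0 + γ₀) ^ 2 * (A * P γ₀ * Cᵀ) i 0
        + ((C * P γ₀ * Cᵀ) 0 0 + γ₀)⁻¹ * (A * S₀ * Cᵀ) i 0) γ₀ := hinv.mul hAPC
  have hCx : HasDerivAt (fun γ : ℝ => (C *ᵥ xhat γ) 0) ((C *ᵥ ζ₀) 0) γ₀ := by
    simp only [Matrix.mulVec, dotProduct]
    apply HasDerivAt.fun_sum
    intro j _
    exact (hx j).const_mul (C 0 j)
  have hAx : HasDerivAt (fun γ : ℝ => (A *ᵥ xhat γ) i) ((A *ᵥ ζ₀) i) γ₀ := by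
    simp only [Matrix.mulVec, dotProduct]
    apply HasDerivAt.fun_sum
    intro j _
    exact (hx j).const_mul (A i j)
  have hmain := hAx.fun_add (((hasDerivAt_const γ₀ y).fun_sub hCx).fun_mul hKent)
  have hfun : (fun γ : ℝ => (A *ᵥ xhat γ + (y - (C *ᵥ xhat γ) 0) • (fun j => K γ j 0)) i)
      = fun γ : ℝ => (A *ᵥ xhat γ) i
        + (y - (C *ᵥ xhat γ) 0) * (((C * P γ * Cᵀ) 0 0 + γ)⁻¹ * (A * P γ * Cᵀ) i 0) := by
    funext γ
    simp [hK, Pi.add_apply, Pi.smul_apply, smul_eq_mul, Matrix.smul_apply]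
  rw [hfun]
  refine hmain.congr_deriv ?_
  symm
  have hK0 : K₀ i 0 = ((C * P γ₀ * Cᵀ) 0 0 + γ₀)⁻¹ * (A * P γ₀ * Cᵀ) i 0 := by
    simp [hK₀, hK γ₀]
  have hG0 : G₀ i 0 = s₀⁻¹ * ((A * S₀ * Cᵀ) i 0 - ((C * S₀ * Cᵀ) 0 0 + 1) * K₀ i 0) := by
    simp [hG₀]
  have hKCv : ((K₀ * C) *ᵥ ζ₀) i = K₀ i 0 * (C *ᵥ ζ₀) 0 := by
    rw [← Matrix.mulVec_mulVec]
    simp [Matrix.mulVec, dotProduct, Fin.sum_univ_one]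
  simp only [Pi.add_apply, Pi.smul_apply, smul_eq_mul, Matrix.sub_mulVec, Pi.sub_apply,
    hKCv, hG0, hK0]
  rw [hs₀_def]
  field_simp
  ring
end
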